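/- For two anticommuting ±1-valued qubit observables O₀, O₁ (Hermitian involutions with O₀O₁ = −O₁O₀) and any qubit density matrix ρ, one has ⟨O₀⟩² + ⟨O₁⟩² ≤ 1 where ⟨O⟩ = Tr(Oρ); consequently for any reals α, β, |α⟨O₀⟩ + β⟨O₁⟩| ≤ √(α²+β²). -/

import Mathlib

open Matrix ComplexOrder

lemma trace_psd_nonneg {n : Type*} [Fintype n] [DecidableEq n]
    (A : Matrix n n ℂ) (hA : A.PosSemidef) : 0 ≤ A.trace := by
  rw [Matrix.trace]
  apply Finset.sum_nonneg
  intro i _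
  exact hA.diag_nonneg

lemma trace_herm_real {n : Type*} [Fintype n] [DecidableEq n]
    (M ρ : Matrix n n ℂ) (hM : M.IsHermitian) (hρ : ρ.IsHermitian) :
    (M * ρ).trace = (((M * ρ).trace).re : ℂ) := by
  rw [eq_comm, Complex.conj_eq_iff_re.symm]
  calc (starRingEnd ℂ) (M * ρ).trace = ((M * ρ)ᴴ).trace := by
        rw [trace_conjTranspose]; rfl
    _ = (M * ρ).trace := by
        rw [conjTranspose_mul, hM.eq, hρ.eq, trace_mul_comm]

lemma second_moment {n : Type*} [Fintype n] [DecidableEq n]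
    (M ρ : Matrix n n ℂ) (hM : M.IsHermitian) (hρ : ρ.PosSemidef)
    (hρ1 : ρ.trace = 1) :
    ((M * ρ).trace) ^ 2 ≤ (M * M * ρ).trace := by
  set t : ℂ := (M * ρ).trace with ht
  have htr : t = ((t.re : ℝ) : ℂ) := trace_herm_real M ρ hM hρ.1
  set N : Matrix n n ℂ := M - t • 1 with hN
  have hNh : Nᴴ = N := by
    rw [hN, conjTranspose_sub, hM.eq, conjTranspose_smul, conjTranspose_one]
    congr 1
    rw [htr]
    simp
  have h0 : 0 ≤ (N * ρ * Nᴴ).trace :=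
    trace_psd_nonneg _ (hρ.mul_mul_conjTranspose_same N)
  have hcalc : (N * ρ * Nᴴ).trace = (M * M * ρ).trace - t ^ 2 := by
    rw [trace_mul_cycle, hNh, hN]
    simp only [sub_mul, mul_sub, smul_mul_assoc, mul_smul_comm, one_mul, mul_one,
      trace_sub, trace_smul, smul_eq_mul, smul_smul, hρ1, ← ht]
    ring
  rw [hcalc] at h0
  exact sub_nonneg.mp h0

theorem stmt14 (O₀ O₁ ρ : Matrix (Fin 2) (Fin 2) ℂ)
    (hO₀ : O₀.IsHermitian) (hO₁ : O₁.IsHermitian)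
    (hO₀sq : O₀ * O₀ = 1) (hO₁sq : O₁ * O₁ = 1)
    (hanti : O₀ * O₁ = -(O₁ * O₀))
    (hρ : ρ.PosSemidef) (hρ1 : ρ.trace = 1) :
    ((O₀ * ρ).trace).re ^ 2 + ((O₁ * ρ).trace).re ^ 2 ≤ 1 ∧
    ∀ α β : ℝ, |α * ((O₀ * ρ).trace).re + β * ((O₁ * ρ).trace).re| ≤
      Real.sqrt (α ^ 2 + β ^ 2) := by
  set a : ℝ := ((O₀ * ρ).trace).re with ha
  set b : ℝ := ((O₁ * ρ).trace).re with hb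
  have ht0 : (O₀ * ρ).trace = ((a : ℝ) : ℂ) := trace_herm_real O₀ ρ hO₀ hρ.1
  have ht1 : (O₁ * ρ).trace = ((b : ℝ) : ℂ) := trace_herm_real O₁ ρ hO₁ hρ.1
  set M : Matrix (Fin 2) (Fin 2) ℂ := (a : ℂ) • O₀ + (b : ℂ) • O₁ with hMdef
  have hM : M.IsHermitian := by
    rw [Matrix.IsHermitian, hMdef, conjTranspose_add, conjTranspose_smul,
      conjTranspose_smul, hO₀.eq, hO₁.eq]
    simp
  have hMM : M * M = (((a ^ 2 + b ^ 2 : ℝ)) : ℂ) • 1 := by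
    rw [hMdef]
    simp only [add_mul, mul_add, smul_mul_assoc, mul_smul_comm, smul_smul,
      hO₀sq, hO₁sq, hanti]
    push_cast
    module
  have htM : (M * ρ).trace = (((a ^ 2 + b ^ 2 : ℝ)) : ℂ) := by
    rw [hMdef, add_mul, smul_mul_assoc, smul_mul_assoc, trace_add, trace_smul,
      trace_smul, ht0, ht1]
    simp only [smul_eq_mul]
    push_cast
    ring
  have hkey := second_moment M ρ hM hρ hρ1
  rw [htM, hMM, smul_mul_assoc, one_mul, trace_smul, smul_eq_mul, hρ1, mul_one] at hkey
  have hreal : ((a ^ 2 + b ^ 2 : ℝ) : ℂ) ^ 2 ≤ ((a ^ 2 + b ^ 2 : ℝ) : ℂ) := hkey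
  have hs : (a ^ 2 + b ^ 2) ^ 2 ≤ a ^ 2 + b ^ 2 := by
    have := hreal
    rw [← Complex.ofReal_pow, Complex.real_le_real] at this
    exact this
  have h1 : a ^ 2 + b ^ 2 ≤ 1 := by nlinarith [sq_nonneg a, sq_nonneg b]
  refine ⟨h1, fun α β => ?_⟩
  have h2 : (α * a + β * b) ^ 2 ≤ α ^ 2 + β ^ 2 := by
    nlinarith [sq_nonneg (α * b - β * a),
      mul_nonneg (add_nonneg (sq_nonneg α) (sq_nonneg β)) (sub_nonneg.2 h1)]
  calc |α * a + β * b| = Real.sqrt ((α * a + β * b) ^ 2) :=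
        (Real.sqrt_sq_eq_abs _).symm
    _ ≤ Real.sqrt (α ^ 2 + β ^ 2) := Real.sqrt_le_sqrt h2
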